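/- Let $V$ be $C^1$ on $[0,\infty)$ with $V' < 0$, $0 < E < V(0)$, $N = V^{-1}(E)$, $\gamma(x) = \sqrt{V(x)-E}$ on $[0,N]$, and let $u$ solve $-u''+Vu=Eu$, $u(0)=0$, $u'(0)=1$. Define $\psi(x) = u(x)\exp(-\int_0^x \gamma(y)\,dy)$. Then $0 \le \psi'(x) \le 1$ for $x \in [0, N]$. -/

import Mathlib

open Set MeasureTheory Filter

theorem stmt_15 (V u u' : ℝ → ℝ) (E N : ℝ)
    (hV : ContDiffOn ℝ 1 V (Set.Ici 0))
    (hV' : ∀ x ≥ (0 : ℝ), derivWithin V (Set.Ici 0) x < 0)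
    (hE : 0 < E ∧ E < V 0)
    (hN : 0 < N) (hVN : V N = E)
    (hu : ∀ x ≥ (0 : ℝ), HasDerivAt u (u' x) x)
    (hu' : ∀ x ≥ (0 : ℝ), HasDerivAt u' ((V x - E) * u x) x)
    (hu0 : u 0 = 0) (hu'0 : u' 0 = 1)
    (ψ : ℝ → ℝ)
    (hψ : ψ = fun x => u x * Real.exp (-∫ y in (0 : ℝ)..x, Real.sqrt (V y - E))) :
    ∀ x ∈ Set.Icc (0 : ℝ) N, 0 ≤ deriv ψ x ∧ deriv ψ x ≤ 1 := by
  set γ : ℝ → ℝ := fun x => Real.sqrt (V x - E) with hγdef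
  set F : ℝ → ℝ := fun x => ∫ y in (0 : ℝ)..x, γ y with hFdef
  have hψF : ψ = fun x => u x * Real.exp (-F x) := hψ
  -- continuity of V
  have hVc : ContinuousOn V (Ici 0) := hV.continuousOn
  have hVat : ∀ x : ℝ, 0 < x → ContinuousAt V x := fun x hx =>
    (hVc x hx.le).continuousAt (Ici_mem_nhds hx)
  have hVanti : StrictAntiOn V (Ici 0) := by
    apply strictAntiOn_of_deriv_neg (convex_Ici 0) hVc
    intro x hx
    rw [interior_Ici] at hx
    have h := hV' x hx.le
    rwa [derivWithin_of_mem_nhds (Ici_mem_nhds hx)] at h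
  have hVE : ∀ x ∈ Icc (0:ℝ) N, E ≤ V x := by
    intro x hx
    rcases eq_or_lt_of_le hx.2 with h | h
    · rw [h]; exact hVN.ge
    · exact le_of_lt (hVN ▸ hVanti hx.1 hN.le h)
  have hVElt : ∀ x ∈ Ico (0:ℝ) N, E < V x := fun x hx => hVN ▸ hVanti hx.1 hN.le hx.2
  -- basic γ facts
  have hγ0 : ∀ x, 0 ≤ γ x := fun x => Real.sqrt_nonneg _
  have hγsq : ∀ x ∈ Icc (0:ℝ) N, γ x ^ 2 = V x - E := fun x hx =>
    Real.sq_sqrt (sub_nonneg.2 (hVE x hx))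
  have hγpos : ∀ x ∈ Ico (0:ℝ) N, 0 < γ x := fun x hx =>
    Real.sqrt_pos.2 (sub_pos.2 (hVElt x hx))
  have hγcont : ContinuousOn γ (Ici 0) :=
    Real.continuous_sqrt.comp_continuousOn (hVc.sub continuousOn_const)
  have hγat : ∀ x : ℝ, 0 < x → ContinuousAt γ x := fun x hx =>
    Real.continuous_sqrt.continuousAt.comp ((hVat x hx).sub continuousAt_const)
  have hγcIoi : ContinuousOn γ (Ioi 0) := fun x hx => (hγat x hx).continuousWithinAt
  have hγcIcc : ContinuousOn γ (Icc 0 N) := hγcont.mono (fun y hy => hy.1)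
  have hγint : ∀ x ∈ Icc (0:ℝ) N, IntervalIntegrable γ volume 0 x := by
    intro x hx
    apply ContinuousOn.intervalIntegrable
    rw [uIcc_of_le hx.1]
    exact hγcont.mono (fun y hy => hy.1)
  -- F facts
  have hF0 : F 0 = 0 := intervalIntegral.integral_same
  have hFc : ContinuousOn F (Icc 0 N) := by
    have h := intervalIntegral.continuousOn_primitive_interval
      (f := γ) (a := 0) (b := N) (μ := volume) ?_
    · rwa [uIcc_of_le hN.le] at h
    · rw [uIcc_of_le hN.le]
      exact (hγcIcc.integrableOn_Icc)
  have hFnn : ∀ x ∈ Icc (0:ℝ) N, 0 ≤ F x := fun x hx =>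
    intervalIntegral.integral_nonneg hx.1 (fun y _ => hγ0 y)
  have hFd : ∀ x ∈ Ioc (0:ℝ) N, HasDerivAt F (γ x) x := by
    intro x hx
    exact intervalIntegral.integral_hasDerivAt_right (hγint x ⟨hx.1.le, hx.2⟩)
      (ContinuousOn.stronglyMeasurableAtFilter isOpen_Ioi hγcIoi x hx.1) (hγat x hx.1)
  -- continuity of u, u'
  have hucAt : ∀ x : ℝ, 0 ≤ x → ContinuousAt u x := fun x hx => (hu x hx).continuousAt
  have hu'cAt : ∀ x : ℝ, 0 ≤ x → ContinuousAt u' x := fun x hx => (hu' x hx).continuousAt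
  have hucOn : ContinuousOn u (Icc 0 N) := fun x hx => (hucAt x hx.1).continuousWithinAt
  have hu'cOn : ContinuousOn u' (Icc 0 N) := fun x hx => (hu'cAt x hx.1).continuousWithinAt
  -- helper 1 : if u' > 0 on [0,b] then u ≥ 0 on [0,b]
  have helper1 : ∀ b ∈ Icc (0:ℝ) N, (∀ y ∈ Icc (0:ℝ) b, 0 < u' y) →
      ∀ y ∈ Icc (0:ℝ) b, 0 ≤ u y := by
    intro b hb hpos
    have hmono : MonotoneOn u (Icc 0 b) := by
      apply monotoneOn_of_hasDerivWithinAt_nonneg (f' := u') (convex_Icc 0 b)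
        (fun x hx => (hucAt x hx.1).continuousWithinAt)
      · intro x hx
        rw [interior_Icc] at hx
        exact ((hu x hx.1.le).hasDerivWithinAt)
      · intro x hx
        rw [interior_Icc] at hx
        exact (hpos x ⟨hx.1.le, hx.2.le⟩).le
    intro y hy
    have := hmono ⟨le_rfl, hb.1⟩ hy hy.1
    · calc (0:ℝ) = u 0 := hu0.symm
        _ ≤ u y := hmono ⟨le_rfl, hy.1.trans hy.2⟩ hy hy.1
  -- helper 2 : if u ≥ 0 on [0,b] then u' ≥ 1 on [0,b]
  have helper2 : ∀ b ∈ Icc (0:ℝ) N, (∀ y ∈ Icc (0:ℝ) b, 0 ≤ u y) →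
      ∀ y ∈ Icc (0:ℝ) b, 1 ≤ u' y := by
    intro b hb hnn
    have hmono : MonotoneOn u' (Icc 0 b) := by
      apply monotoneOn_of_hasDerivWithinAt_nonneg (f' := fun x => (V x - E) * u x)
        (convex_Icc 0 b) (fun x hx => (hu'cAt x hx.1).continuousWithinAt)
      · intro x hx
        rw [interior_Icc] at hx
        exact ((hu' x hx.1.le).hasDerivWithinAt)
      · intro x hx
        rw [interior_Icc] at hx
        have hxIcc : x ∈ Icc (0:ℝ) N := ⟨hx.1.le, hx.2.le.trans hb.2⟩
        exact mul_nonneg (sub_nonneg.2 (hVE x hxIcc)) (hnn x ⟨hx.1.le, hx.2.le⟩)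
    intro y hy
    calc (1:ℝ) = u' 0 := hu'0.symm
      _ ≤ u' y := hmono ⟨le_rfl, hy.1.trans hy.2⟩ hy hy.1
  -- the key positivity result
  have key : ∀ x ∈ Icc (0:ℝ) N, 1 ≤ u' x ∧ 0 ≤ u x := by
    set S : Set ℝ := {x | x ∈ Icc (0:ℝ) N ∧ ∀ y ∈ Icc (0:ℝ) x, 1 ≤ u' y} with hSdef
    have hS0 : (0:ℝ) ∈ S := by
      refine ⟨⟨le_rfl, hN.le⟩, fun y hy => ?_⟩
      have hy0 : y = 0 := le_antisymm hy.2 hy.1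
      rw [hy0, hu'0]
    have hSbdd : BddAbove S := ⟨N, fun x hx => hx.1.2⟩
    set c := sSup S with hcdef
    have hc0 : 0 ≤ c := le_csSup hSbdd hS0
    have hcN : c ≤ N := csSup_le ⟨0, hS0⟩ (fun x hx => hx.1.2)
    have hcIco : ∀ y, 0 ≤ y → y < c → 1 ≤ u' y := by
      intro y hy0 hyc
      obtain ⟨s, hsS, hys⟩ := exists_lt_of_lt_csSup ⟨0, hS0⟩ hyc
      exact hsS.2 y ⟨hy0, hys.le⟩
    have hu'c : 1 ≤ u' c := by
      rcases eq_or_lt_of_le hc0 with h | h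
      · rw [← h, hu'0]
      · have hcont : ContinuousWithinAt u' (Iio c) c := (hu'cAt c hc0).continuousWithinAt
        have hev : ∀ᶠ y in nhdsWithin c (Iio c), 1 ≤ u' y := by
          filter_upwards [Ioo_mem_nhdsLT_of_mem (show c ∈ Ioc 0 c from ⟨h, le_rfl⟩)] with y hy
          exact hcIco y hy.1.le hy.2
        exact ge_of_tendsto hcont hev
    have hcS : c ∈ S := by
      refine ⟨⟨hc0, hcN⟩, fun y hy => ?_⟩
      rcases eq_or_lt_of_le hy.2 with h | h
      · rw [h]; exact hu'c
      · exact hcIco y hy.1 h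
    have hcEq : c = N := by
      by_contra hne
      have hcltN : c < N := lt_of_le_of_ne hcN hne
      have hev : ∀ᶠ y in nhds c, 0 < u' y :=
        (hu'cAt c hc0).eventually (eventually_gt_nhds (lt_of_lt_of_le one_pos hu'c))
      obtain ⟨ε, hε, hball⟩ := Metric.eventually_nhds_iff.1 hev
      set δ := min (ε/2) (N - c) with hδdef
      have hδ0 : 0 < δ := lt_min (by linarith) (by linarith)
      have hδε : δ ≤ ε/2 := min_le_left _ _
      have hcd : c + δ ≤ N := by
        have := min_le_right (ε/2) (N - c); simp only [hδdef] at *; linarith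
      have hu'posOn : ∀ y ∈ Icc (0:ℝ) (c+δ), 0 < u' y := by
        intro y hy
        rcases le_or_gt y c with h | h
        · exact lt_of_lt_of_le one_pos (hcS.2 y ⟨hy.1, h⟩)
        · apply hball
          rw [Real.dist_eq, abs_lt]
          constructor
          · linarith
          · have := hy.2; linarith
      have hupos := helper1 (c+δ) ⟨by linarith, hcd⟩ hu'posOn
      have hu'ge := helper2 (c+δ) ⟨by linarith, hcd⟩ hupos
      have hmem : c + δ ∈ S := ⟨⟨by linarith, hcd⟩, hu'ge⟩
      have := le_csSup hSbdd hmem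
      linarith
    intro x hx
    have h1 : 1 ≤ u' x := (hcEq ▸ hcS).2 x hx
    have h0 : 0 ≤ u x :=
      helper1 N ⟨hN.le, le_rfl⟩
        (fun y hy => lt_of_lt_of_le one_pos ((hcEq ▸ hcS).2 y hy)) x hx
    exact ⟨h1, h0⟩
  -- derivative of V on the interior
  have hVd : ∀ x ∈ Ioo (0:ℝ) N, HasDerivAt V (deriv V x) x ∧ deriv V x < 0 := by
    intro x hx
    have hdiff : DifferentiableAt ℝ V x :=
      ((hV.differentiableOn one_ne_zero) x hx.1.le).differentiableAt (Ici_mem_nhds hx.1)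
    refine ⟨hdiff.hasDerivAt, ?_⟩
    have h := hV' x hx.1.le
    rwa [derivWithin_of_mem_nhds (Ici_mem_nhds hx.1)] at h
  -- derivative of γ on the interior
  have hγd : ∀ x ∈ Ioo (0:ℝ) N, HasDerivAt γ (deriv V x / (2 * γ x)) x ∧
      deriv V x / (2 * γ x) < 0 := by
    intro x hx
    obtain ⟨hVdx, hVneg⟩ := hVd x hx
    have hne : V x - E ≠ 0 := ne_of_gt (sub_pos.2 (hVElt x ⟨hx.1.le, hx.2⟩))
    have h := (hVdx.sub_const E).sqrt hne
    have hgpos := hγpos x ⟨hx.1.le, hx.2⟩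
    exact ⟨h, div_neg_of_neg_of_pos hVneg (by positivity)⟩
  -- the auxiliary functions G and W
  set G : ℝ → ℝ := fun x => (u' x - γ x * u x) * Real.exp (F x) with hGdef
  set W : ℝ → ℝ := fun x => (u' x + γ x * u x) * Real.exp (-F x) with hWdef
  have hexpc : ContinuousOn (fun x => Real.exp (F x)) (Icc 0 N) :=
    Real.continuous_exp.comp_continuousOn hFc
  have hexpc' : ContinuousOn (fun x => Real.exp (-F x)) (Icc 0 N) :=
    Real.continuous_exp.comp_continuousOn hFc.neg
  have hGc : ContinuousOn G (Icc 0 N) := (hu'cOn.sub (hγcIcc.mul hucOn)).mul hexpc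
  have hWc : ContinuousOn W (Icc 0 N) := (hu'cOn.add (hγcIcc.mul hucOn)).mul hexpc'
  have hGd : ∀ x ∈ Ioo (0:ℝ) N,
      HasDerivAt G (-(deriv V x / (2 * γ x)) * u x * Real.exp (F x)) x := by
    intro x hx
    obtain ⟨hγdx, _⟩ := hγd x hx
    have hx' : x ∈ Ioc (0:ℝ) N := ⟨hx.1, hx.2.le⟩
    have h1 : HasDerivAt (fun y => u' y - γ y * u y)
        ((V x - E) * u x - (deriv V x / (2 * γ x) * u x + γ x * u' x)) x :=
      (hu' x hx.1.le).sub (hγdx.mul (hu x hx.1.le))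
    have h2 : HasDerivAt (fun y => Real.exp (F y)) (Real.exp (F x) * γ x) x :=
      (Real.hasDerivAt_exp (F x)).comp x (hFd x hx')
    have h3 := h1.mul h2
    refine h3.congr_deriv ?_
    have hsq := hγsq x ⟨hx.1.le, hx.2.le⟩
    linear_combination (-(u x * Real.exp (F x))) * hsq
  have hWd : ∀ x ∈ Ioo (0:ℝ) N,
      HasDerivAt W ((deriv V x / (2 * γ x)) * u x * Real.exp (-F x)) x := by
    intro x hx
    obtain ⟨hγdx, _⟩ := hγd x hx
    have hx' : x ∈ Ioc (0:ℝ) N := ⟨hx.1, hx.2.le⟩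
    have h1 : HasDerivAt (fun y => u' y + γ y * u y)
        ((V x - E) * u x + (deriv V x / (2 * γ x) * u x + γ x * u' x)) x :=
      (hu' x hx.1.le).add (hγdx.mul (hu x hx.1.le))
    have h2 : HasDerivAt (fun y => Real.exp (-F y)) (Real.exp (-F x) * (-γ x)) x :=
      (show HasDerivAt (fun y => -F y) (-γ x) x from (hFd x hx').neg).exp
    have h3 := h1.mul h2
    refine h3.congr_deriv ?_
    have hsq := hγsq x ⟨hx.1.le, hx.2.le⟩
    linear_combination (-(u x * Real.exp (-F x))) * hsq
  have hGmono : MonotoneOn G (Icc 0 N) := by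
    apply monotoneOn_of_hasDerivWithinAt_nonneg
      (f' := fun x => -(deriv V x / (2 * γ x)) * u x * Real.exp (F x)) (convex_Icc 0 N) hGc
    · intro x hx
      rw [interior_Icc] at hx
      exact (hGd x hx).hasDerivWithinAt
    · intro x hx
      rw [interior_Icc] at hx
      obtain ⟨_, hneg⟩ := hγd x hx
      have hup := (key x ⟨hx.1.le, hx.2.le⟩).2
      exact mul_nonneg (mul_nonneg (neg_nonneg.2 hneg.le) hup) (Real.exp_pos _).le
  have hWanti : AntitoneOn W (Icc 0 N) := by
    apply antitoneOn_of_hasDerivWithinAt_nonpos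
      (f' := fun x => (deriv V x / (2 * γ x)) * u x * Real.exp (-F x)) (convex_Icc 0 N) hWc
    · intro x hx
      rw [interior_Icc] at hx
      exact (hWd x hx).hasDerivWithinAt
    · intro x hx
      rw [interior_Icc] at hx
      obtain ⟨_, hneg⟩ := hγd x hx
      have hup := (key x ⟨hx.1.le, hx.2.le⟩).2
      exact mul_nonpos_of_nonpos_of_nonneg
        (mul_nonpos_of_nonpos_of_nonneg hneg.le hup) (Real.exp_pos _).le
  have hG0 : G 0 = 1 := by simp [hGdef, hu0, hu'0, hF0]
  have hW0 : W 0 = 1 := by simp [hWdef, hu0, hu'0, hF0]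
  have hGge : ∀ x ∈ Icc (0:ℝ) N, 1 ≤ G x := fun x hx =>
    hG0 ▸ hGmono (left_mem_Icc.2 hN.le) hx hx.1
  have hWle : ∀ x ∈ Icc (0:ℝ) N, W x ≤ 1 := fun x hx =>
    hW0 ▸ hWanti (left_mem_Icc.2 hN.le) hx hx.1
  -- derivative of ψ on (0, N]
  have hψd : ∀ x ∈ Ioc (0:ℝ) N,
      HasDerivAt ψ ((u' x - γ x * u x) * Real.exp (-F x)) x := by
    intro x hx
    rw [hψF]
    have h1 : HasDerivAt (fun y => Real.exp (-F y)) (Real.exp (-F x) * (-γ x)) x :=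
      (show HasDerivAt (fun y => -F y) (-γ x) x from (hFd x hx).neg).exp
    have h2 := (hu x hx.1.le).mul h1
    refine h2.congr_deriv ?_
    ring
  -- conclusion
  intro x hx
  rcases eq_or_lt_of_le hx.1 with h0 | h0
  · -- x = 0
    subst h0
    by_cases hdiff : DifferentiableAt ℝ ψ 0
    · have hFd0 : HasDerivWithinAt F (γ 0) (Ici 0) 0 := by
        apply intervalIntegral.integral_hasDerivWithinAt_right (t := Ioi 0)
          (hγint 0 (left_mem_Icc.2 hN.le))
        · refine ⟨Icc 0 N, ?_, hγcIcc.aestronglyMeasurable measurableSet_Icc⟩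
          exact Filter.mem_of_superset
            (Filter.inter_mem self_mem_nhdsWithin
              (mem_nhdsWithin_of_mem_nhds (Iic_mem_nhds hN)))
            (fun y hy => ⟨hy.1.le, hy.2⟩)
        · exact (hγcont 0 Set.self_mem_Ici).mono Ioi_subset_Ici_self
      have hψd0 : HasDerivWithinAt ψ 1 (Ici 0) 0 := by
        rw [hψF]
        have h1 : HasDerivWithinAt (fun y => Real.exp (-F y))
            (Real.exp (-F 0) * (-γ 0)) (Ici 0) 0 :=
          (show HasDerivWithinAt (fun y => -F y) (-γ 0) (Ici 0) 0 from hFd0.neg).exp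
        have h2 := ((hu 0 le_rfl).hasDerivWithinAt).mul h1
        refine h2.congr_deriv ?_
        simp [hu0, hu'0, hF0]
      have hud : UniqueDiffWithinAt ℝ (Ici (0:ℝ)) 0 := uniqueDiffOn_Ici 0 0 Set.self_mem_Ici
      have e1 := (hdiff.hasDerivAt.hasDerivWithinAt (s := Ici 0)).derivWithin hud
      have e2 := hψd0.derivWithin hud
      have : deriv ψ 0 = 1 := by rw [← e1, e2]
      rw [this]
      norm_num
    · rw [deriv_zero_of_not_differentiableAt hdiff]
      norm_num
  · -- 0 < x
    have hx' : x ∈ Ioc (0:ℝ) N := ⟨h0, hx.2⟩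
    rw [(hψd x hx').deriv]
    have hGx := hGge x hx
    have hWx := hWle x hx
    have hEF := Real.exp_pos (F x)
    have hEF' := Real.exp_pos (-F x)
    have hupos := (key x hx).2
    have hγnn := hγ0 x
    constructor
    · have hfx : 0 ≤ u' x - γ x * u x := by
        by_contra hlt
        push_neg at hlt
        have : G x < 0 := mul_neg_of_neg_of_pos hlt hEF
        linarith
      exact mul_nonneg hfx hEF'.le
    · have hWeq : W x = (u' x + γ x * u x) * Real.exp (-F x) := rfl
      have hid : (u' x - γ x * u x) * Real.exp (-F x) =
          (u' x + γ x * u x) * Real.exp (-F x) - 2 * (γ x * u x * Real.exp (-F x)) := by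
        ring
      have hprod : 0 ≤ γ x * u x * Real.exp (-F x) :=
        mul_nonneg (mul_nonneg hγnn hupos) hEF'.le
      rw [hid, ← hWeq]
      linarith
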